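/- For every Hermitian matrix σ ∈ ℂ^{m×m}, every s ∈ [0,T] and every t ≥ 0, the trace-norm inequality ‖e^{tA(s)†} σ e^{tA(s)}‖₁ ≤ ‖σ‖₁ holds. -/

import Mathlib

open Matrix Set
open scoped ComplexOrder

section CalcSection

attribute [local instance] Matrix.linftyOpNormedRing Matrix.linftyOpNormedAlgebra

variable {mm : ℕ}

-- diagonal entries of a PSD matrix have nonnegative real part
lemma psd_diag_re_nonneg {M : Matrix (Fin mm) (Fin mm) ℂ} (hM : M.PosSemidef) (i : Fin mm) :
    0 ≤ (M i i).re := by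
  have h := hM.re_dotProduct_nonneg (Pi.single i 1)
  simpa [dotProduct, mulVec, Pi.single_apply, Finset.sum_ite_eq, mul_ite] using h

lemma trace_re_eq_sum_diag (M : Matrix (Fin mm) (Fin mm) ℂ) :
    M.trace.re = ∑ i, (M i i).re := by
  simp [Matrix.trace, Matrix.diag, Complex.re_sum]

lemma trace_re_nonneg_of_psd {M : Matrix (Fin mm) (Fin mm) ℂ} (hM : M.PosSemidef) :
    0 ≤ M.trace.re := by
  rw [trace_re_eq_sum_diag]
  exact Finset.sum_nonneg fun i _ => psd_diag_re_nonneg hM i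

open scoped MatrixOrder in
lemma trace_mul_re_nonneg {P Q : Matrix (Fin mm) (Fin mm) ℂ}
    (hP : P.PosSemidef) (hQ : Q.PosSemidef) : 0 ≤ ((P * Q).trace).re := by
  obtain ⟨B, rfl⟩ := CStarAlgebra.nonneg_iff_eq_star_mul_self.mp (Matrix.nonneg_iff_posSemidef.mpr hQ)
  rw [Matrix.star_eq_conjTranspose]
  have h : P * (Bᴴ * B) = P * Bᴴ * B := by rw [Matrix.mul_assoc]
  rw [h, Matrix.trace_mul_cycle]
  exact trace_re_nonneg_of_psd (hP.mul_mul_conjTranspose_same B)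

lemma exp_real_conjTranspose (A : Matrix (Fin mm) (Fin mm) ℂ) (u : ℝ) :
    NormedSpace.exp (u • Aᴴ) = (NormedSpace.exp (u • A))ᴴ := by
  rw [← Matrix.exp_conjTranspose]
  congr 1
  rw [Matrix.conjTranspose_smul]
  simp

/-- Key monotonicity: conjugation by `exp (t • A)` with `A + Aᴴ ≤ 0` decreases the trace of a
positive semidefinite matrix. -/
lemma trace_exp_conj_le (A P : Matrix (Fin mm) (Fin mm) ℂ) (hP : P.PosSemidef)
    (hN : Matrix.PosSemidef (-(A + Aᴴ))) {t : ℝ} (ht : 0 ≤ t) :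
    ((NormedSpace.exp (t • Aᴴ) * P * NormedSpace.exp (t • A)).trace).re ≤ P.trace.re := by
  set g : ℝ → ℝ := fun r =>
    ((NormedSpace.exp (r • Aᴴ) * P * NormedSpace.exp (r • A)).trace).re with hg_def
  -- the continuous ℝ-linear map  X ↦ (trace X).re
  let φ : Matrix (Fin mm) (Fin mm) ℂ →L[ℝ] ℝ :=
    Complex.reCLM.comp
      (LinearMap.toContinuousLinearMap
        ((Matrix.traceLinearMap (Fin mm) ℂ ℂ).restrictScalars ℝ))
  have hφ : ∀ X : Matrix (Fin mm) (Fin mm) ℂ, φ X = X.trace.re := fun _ => rfl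
  have hg : ∀ u : ℝ, HasDerivAt g
      (((Aᴴ * NormedSpace.exp (u • Aᴴ) * P * NormedSpace.exp (u • A) +
        NormedSpace.exp (u • Aᴴ) * P * (NormedSpace.exp (u • A) * A)).trace).re) u := by
    intro u
    have h1 : HasDerivAt (fun r : ℝ => NormedSpace.exp (r • Aᴴ))
        (Aᴴ * NormedSpace.exp (u • Aᴴ)) u := hasDerivAt_exp_smul_const' Aᴴ u
    have h2 : HasDerivAt (fun r : ℝ => NormedSpace.exp (r • A))
        (NormedSpace.exp (u • A) * A) u := hasDerivAt_exp_smul_const A u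
    have hf := (h1.mul_const P).mul h2
    have := φ.hasFDerivAt.comp_hasDerivAt u hf
    exact this
  -- the derivative is nonpositive
  have hderiv_nonpos : ∀ u : ℝ, deriv g u ≤ 0 := by
    intro u
    rw [(hg u).deriv]
    set E := NormedSpace.exp (u • A)
    have hE' : NormedSpace.exp (u • Aᴴ) = Eᴴ := exp_real_conjTranspose A u
    have hQ : (Eᴴ * P * E).PosSemidef := hP.conjTranspose_mul_mul_same E
    have htr : (Aᴴ * NormedSpace.exp (u • Aᴴ) * P * E +
        NormedSpace.exp (u • Aᴴ) * P * (E * A)).trace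
        = -(((-(A + Aᴴ)) * (Eᴴ * P * E)).trace) := by
      rw [hE']
      have e1 : Aᴴ * Eᴴ * P * E = Aᴴ * (Eᴴ * P * E) := by
        simp only [Matrix.mul_assoc]
      have e2 : (Eᴴ * P * (E * A)).trace = (A * (Eᴴ * P * E)).trace := by
        rw [show Eᴴ * P * (E * A) = (Eᴴ * P * E) * A by simp only [Matrix.mul_assoc],
          Matrix.trace_mul_comm]
      rw [Matrix.trace_add, e1, e2, ← Matrix.trace_add, ← Matrix.add_mul, ← Matrix.trace_neg,
        ← Matrix.neg_mul, neg_neg, add_comm Aᴴ A]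
    rw [htr]
    have := trace_mul_re_nonneg hN hQ
    simp only [Matrix.trace_neg, Complex.neg_re]
    linarith
  have hanti : Antitone g :=
    antitone_of_deriv_nonpos (fun u => (hg u).differentiableAt) hderiv_nonpos
  have h0 : g 0 = P.trace.re := by
    simp [hg_def, NormedSpace.exp_zero]
  calc g t ≤ g 0 := hanti ht
    _ = P.trace.re := h0

end CalcSection

attribute [local instance] Matrix.normedAddCommGroup Matrix.normedSpace

/-- Trace norm: `‖X‖₁ = Tr √(XᴴX)`. -/
noncomputable def traceNorm {m : ℕ} (X : Matrix (Fin m) (Fin m) ℂ) : ℝ :=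
  (((Matrix.posSemidef_conjTranspose_mul_self X).1.eigenvectorUnitary : Matrix (Fin m) (Fin m) ℂ) *
    diagonal (((↑) : ℝ → ℂ) ∘ (√·) ∘ (Matrix.posSemidef_conjTranspose_mul_self X).1.eigenvalues) *
    (star (Matrix.posSemidef_conjTranspose_mul_self X).1.eigenvectorUnitary : Matrix (Fin m) (Fin m) ℂ)).trace.re

/-- `A(t) = -i H(t) - (1/2) ∑ₖ γₖ(t) Lₖᴴ Lₖ`. -/
noncomputable def Aop {m K : ℕ} (H : ℝ → Matrix (Fin m) (Fin m) ℂ)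
    (L : Fin K → Matrix (Fin m) (Fin m) ℂ) (γ : Fin K → ℝ → ℝ) (t : ℝ) : Matrix (Fin m) (Fin m) ℂ :=
  (-Complex.I) • H t - (1 / 2 : ℂ) • ∑ k, (γ k t : ℂ) • ((L k)ᴴ * L k)

section Spectral

variable {mm : ℕ}

lemma conj_diag_trace_re (U : Matrix (Fin mm) (Fin mm) ℂ) (hU1 : star U * U = 1)
    (d : Fin mm → ℝ) :
    ((U * Matrix.diagonal (fun i => (d i : ℂ)) * star U).trace).re = ∑ i, d i := by
  rw [Matrix.trace_mul_cycle, hU1, Matrix.one_mul, Matrix.trace_diagonal]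
  simp [Complex.re_sum]

lemma conj_mul_conj (U : Matrix (Fin mm) (Fin mm) ℂ) (hU1 : star U * U = 1)
    (d e : Fin mm → ℂ) :
    (U * Matrix.diagonal d * star U) * (U * Matrix.diagonal e * star U)
      = U * Matrix.diagonal (fun i => d i * e i) * star U := by
  have h : (U * Matrix.diagonal d * star U) * (U * Matrix.diagonal e * star U)
      = U * (Matrix.diagonal d * (star U * U) * Matrix.diagonal e) * star U := by
    simp only [Matrix.mul_assoc]
  rw [h, hU1, Matrix.mul_one, Matrix.diagonal_mul_diagonal]

lemma conj_diag_psd (U : Matrix (Fin mm) (Fin mm) ℂ) (d : Fin mm → ℝ) (hd : ∀ i, 0 ≤ d i) :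
    Matrix.PosSemidef (U * Matrix.diagonal (fun i => (d i : ℂ)) * star U) := by
  have hdd : Matrix.PosSemidef (Matrix.diagonal (fun i => (d i : ℂ))) :=
    Matrix.posSemidef_diagonal_iff.mpr fun i => Complex.zero_le_real.mpr (hd i)
  simpa [Matrix.star_eq_conjTranspose] using hdd.mul_mul_conjTranspose_same U

open scoped MatrixOrder in
/-- The trace norm of a Hermitian matrix is the sum of the absolute values of its eigenvalues. -/
lemma traceNorm_hermitian_eq_sum_abs {Z : Matrix (Fin mm) (Fin mm) ℂ} (hZ : Z.IsHermitian) :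
    traceNorm Z = ∑ i, |hZ.eigenvalues i| := by
  set U : Matrix (Fin mm) (Fin mm) ℂ := (hZ.eigenvectorUnitary : Matrix (Fin mm) (Fin mm) ℂ)
    with hU_def
  have hU1 : star U * U = 1 := Matrix.mem_unitaryGroup_iff'.mp hZ.eigenvectorUnitary.2
  have hspec : Z = U * Matrix.diagonal (fun i => ((hZ.eigenvalues i : ℝ) : ℂ)) * star U :=
    hZ.spectral_theorem
  set W : Matrix (Fin mm) (Fin mm) ℂ :=
    U * Matrix.diagonal (fun i => ((|hZ.eigenvalues i| : ℝ) : ℂ)) * star U with hW_def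
  have hWpsd : W.PosSemidef := conj_diag_psd U _ fun i => abs_nonneg _
  have hWsq : W ^ 2 = Zᴴ * Z := by
    rw [pow_two, hZ.eq, hW_def, conj_mul_conj U hU1]
    conv_rhs => rw [hspec, conj_mul_conj U hU1]
    have hfun : (fun i => ((|hZ.eigenvalues i| : ℝ) : ℂ) * ((|hZ.eigenvalues i| : ℝ) : ℂ))
        = fun i => ((hZ.eigenvalues i : ℝ) : ℂ) * ((hZ.eigenvalues i : ℝ) : ℂ) := by
      funext i
      rw [← Complex.ofReal_mul, ← Complex.ofReal_mul, abs_mul_abs_self]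
    rw [hfun]
  have hZZ := Matrix.posSemidef_conjTranspose_mul_self Z
  set U' : Matrix (Fin mm) (Fin mm) ℂ := (hZZ.1.eigenvectorUnitary : Matrix (Fin mm) (Fin mm) ℂ)
    with hU'_def
  have hU1' : star U' * U' = 1 := Matrix.mem_unitaryGroup_iff'.mp hZZ.1.eigenvectorUnitary.2
  have hW'psd : (U' * diagonal (((↑) : ℝ → ℂ) ∘ (√·) ∘ hZZ.1.eigenvalues) * star U').PosSemidef :=
    conj_diag_psd U' (fun i => √(hZZ.1.eigenvalues i)) fun i => Real.sqrt_nonneg _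
  have hW'sq : (U' * diagonal (((↑) : ℝ → ℂ) ∘ (√·) ∘ hZZ.1.eigenvalues) * star U') *
      (U' * diagonal (((↑) : ℝ → ℂ) ∘ (√·) ∘ hZZ.1.eigenvalues) * star U') = Zᴴ * Z := by
    rw [conj_mul_conj U' hU1']
    have hd : (fun i => (((↑) : ℝ → ℂ) ∘ (√·) ∘ hZZ.1.eigenvalues) i *
        (((↑) : ℝ → ℂ) ∘ (√·) ∘ hZZ.1.eigenvalues) i) =
        (RCLike.ofReal ∘ hZZ.1.eigenvalues : Fin mm → ℂ) := by
      funext i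
      simp only [Function.comp_apply]
      rw [← Complex.ofReal_mul, Real.mul_self_sqrt (hZZ.eigenvalues_nonneg i)]
      rfl
    rw [hd]
    exact hZZ.1.spectral_theorem.symm
  have hWeq : W = U' * diagonal (((↑) : ℝ → ℂ) ∘ (√·) ∘ hZZ.1.eigenvalues) * star U' :=
    (CFC.sqrt_unique ((pow_two W).symm.trans hWsq) hWpsd.nonneg).symm.trans
      (CFC.sqrt_unique hW'sq hW'psd.nonneg)
  rw [traceNorm, ← hWeq, hW_def, conj_diag_trace_re U hU1]

/-- Upper bound: trace norm of a difference of PSD matrices. -/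
lemma traceNorm_sub_le {X Y : Matrix (Fin mm) (Fin mm) ℂ}
    (hX : X.PosSemidef) (hY : Y.PosSemidef) :
    traceNorm (X - Y) ≤ X.trace.re + Y.trace.re := by
  have hZ : (X - Y).IsHermitian := hX.1.sub hY.1
  set U : Matrix (Fin mm) (Fin mm) ℂ := (hZ.eigenvectorUnitary : Matrix (Fin mm) (Fin mm) ℂ)
    with hU_def
  have hU1 : star U * U = 1 := Matrix.mem_unitaryGroup_iff'.mp hZ.eigenvectorUnitary.2
  have hU2 : U * star U = 1 := Matrix.mem_unitaryGroup_iff.mp hZ.eigenvectorUnitary.2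
  have hspec : X - Y = U * Matrix.diagonal (fun i => ((hZ.eigenvalues i : ℝ) : ℂ)) * star U :=
    hZ.spectral_theorem
  have hdiag : star U * (X - Y) * U
      = Matrix.diagonal (fun i => ((hZ.eigenvalues i : ℝ) : ℂ)) := by
    conv_lhs => rw [hspec]
    have h : star U * (U * Matrix.diagonal (fun i => ((hZ.eigenvalues i : ℝ) : ℂ)) * star U) * U
        = (star U * U) * Matrix.diagonal (fun i => ((hZ.eigenvalues i : ℝ) : ℂ))
          * (star U * U) := by
      simp only [Matrix.mul_assoc]
    rw [h, hU1, Matrix.one_mul, Matrix.mul_one]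
  have hXc : (star U * X * U).PosSemidef := by
    simpa [Matrix.star_eq_conjTranspose] using hX.conjTranspose_mul_mul_same U
  have hYc : (star U * Y * U).PosSemidef := by
    simpa [Matrix.star_eq_conjTranspose] using hY.conjTranspose_mul_mul_same U
  have hsplit : star U * (X - Y) * U = star U * X * U - star U * Y * U := by
    rw [Matrix.mul_sub, Matrix.sub_mul]
  have heig : ∀ i, hZ.eigenvalues i
      = ((star U * X * U) i i).re - ((star U * Y * U) i i).re := by
    intro i
    have h2 := congrArg (fun M : Matrix (Fin mm) (Fin mm) ℂ => (M i i).re) (hsplit.symm.trans hdiag)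
    simpa [Matrix.diagonal_apply_eq, Matrix.sub_apply, Complex.sub_re] using h2.symm
  have habs : ∀ i, |hZ.eigenvalues i|
      ≤ ((star U * X * U) i i).re + ((star U * Y * U) i i).re := by
    intro i
    have hx := psd_diag_re_nonneg hXc i
    have hy := psd_diag_re_nonneg hYc i
    rw [heig i, abs_le]
    constructor <;> linarith
  have htrX : (star U * X * U).trace.re = X.trace.re := by
    rw [Matrix.trace_mul_cycle, hU2, Matrix.one_mul]
  have htrY : (star U * Y * U).trace.re = Y.trace.re := by
    rw [Matrix.trace_mul_cycle, hU2, Matrix.one_mul]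
  rw [traceNorm_hermitian_eq_sum_abs hZ, ← htrX, ← htrY,
    trace_re_eq_sum_diag, trace_re_eq_sum_diag, ← Finset.sum_add_distrib]
  exact Finset.sum_le_sum fun i _ => habs i

/-- Decompose a Hermitian matrix into PSD parts realizing its trace norm. -/
lemma exists_psd_decomp {σ : Matrix (Fin mm) (Fin mm) ℂ} (hσ : σ.IsHermitian) :
    ∃ P N : Matrix (Fin mm) (Fin mm) ℂ, P.PosSemidef ∧ N.PosSemidef ∧ σ = P - N ∧
      P.trace.re + N.trace.re = traceNorm σ := by
  set U : Matrix (Fin mm) (Fin mm) ℂ := (hσ.eigenvectorUnitary : Matrix (Fin mm) (Fin mm) ℂ)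
    with hU_def
  have hU1 : star U * U = 1 := Matrix.mem_unitaryGroup_iff'.mp hσ.eigenvectorUnitary.2
  set lam := hσ.eigenvalues with hlam_def
  refine ⟨U * Matrix.diagonal (fun i => ((max (lam i) 0 : ℝ) : ℂ)) * star U,
    U * Matrix.diagonal (fun i => ((max (-lam i) 0 : ℝ) : ℂ)) * star U,
    conj_diag_psd U _ (fun i => le_max_right _ _),
    conj_diag_psd U _ (fun i => le_max_right _ _), ?_, ?_⟩
  · have hspec : σ = U * Matrix.diagonal (fun i => ((lam i : ℝ) : ℂ)) * star U :=
      hσ.spectral_theorem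
    conv_lhs => rw [hspec]
    rw [← Matrix.sub_mul, ← Matrix.mul_sub, Matrix.diagonal_sub]
    have hfun : (fun i => ((max (lam i) 0 : ℝ) : ℂ) - ((max (-lam i) 0 : ℝ) : ℂ))
        = fun i => ((lam i : ℝ) : ℂ) := by
      funext i
      rw [← Complex.ofReal_sub, max_zero_sub_max_neg_zero_eq_self]
    rw [hfun]
  · rw [conj_diag_trace_re U hU1, conj_diag_trace_re U hU1,
      traceNorm_hermitian_eq_sum_abs hσ, ← Finset.sum_add_distrib]
    refine Finset.sum_congr rfl fun i _ => ?_
    rcases le_total 0 (lam i) with h | h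
    · rw [max_eq_left h, max_eq_right (by linarith), add_zero, abs_of_nonneg h]
    · rw [max_eq_right h, max_eq_left (by linarith), zero_add, abs_of_nonpos h]

end Spectral

theorem stmt_4 {m K : ℕ} (hm : 1 ≤ m) (hK : 1 ≤ K)
    (H : ℝ → Matrix (Fin m) (Fin m) ℂ) (hH : ∀ t, (H t).IsHermitian)
    (L : Fin K → Matrix (Fin m) (Fin m) ℂ)
    (γ : Fin K → ℝ → ℝ) (hγc : ∀ k, Continuous (γ k)) (hγ : ∀ k t, 0 ≤ γ k t)
    (T : ℝ) (hT : 0 < T)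
    (σ : Matrix (Fin m) (Fin m) ℂ) (hσ : σ.IsHermitian)
    (s : ℝ) (hs : s ∈ Set.Icc (0 : ℝ) T) (t : ℝ) (ht : 0 ≤ t) :
    traceNorm (NormedSpace.exp (t • (Aop H L γ s)ᴴ) * σ *
      NormedSpace.exp (t • Aop H L γ s)) ≤ traceNorm σ := by
  set A := Aop H L γ s with hA_def
  set S : Matrix (Fin m) (Fin m) ℂ := ∑ k, (γ k s : ℂ) • ((L k)ᴴ * L k) with hS_def
  have hSpsd : S.PosSemidef := by
    rw [hS_def]
    refine Finset.sum_induction _ _ (fun a b ha hb => ha.add hb) Matrix.PosSemidef.zero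
      fun k _ => ?_
    have hterm : (γ k s : ℂ) • ((L k)ᴴ * L k)
        = ((Real.sqrt (γ k s) : ℂ) • L k)ᴴ * ((Real.sqrt (γ k s) : ℂ) • L k) := by
      rw [Matrix.conjTranspose_smul, Matrix.smul_mul, Matrix.mul_smul, smul_smul]
      congr 1
      rw [Complex.star_def, Complex.conj_ofReal, ← Complex.ofReal_mul,
        Real.mul_self_sqrt (hγ k s)]
    rw [hterm]
    exact Matrix.posSemidef_conjTranspose_mul_self _
  have hSherm : Sᴴ = S := hSpsd.1
  have hAH : Aᴴ = Complex.I • H s - (1 / 2 : ℂ) • S := by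
    rw [hA_def, Aop, ← hS_def, Matrix.conjTranspose_sub, Matrix.conjTranspose_smul,
      Matrix.conjTranspose_smul, (hH s).eq, hSherm]
    congr 1 <;> simp [Complex.star_def]
  have hNpsd : Matrix.PosSemidef (-(A + Aᴴ)) := by
    have : -(A + Aᴴ) = S := by
      rw [hAH, hA_def, Aop, ← hS_def]
      module
    rw [this]
    exact hSpsd
  obtain ⟨P, N, hP, hN, hde, htr⟩ := exists_psd_decomp hσ
  set M' := NormedSpace.exp (t • Aᴴ) with hM'_def
  set M := NormedSpace.exp (t • A) with hM_def
  have hM' : M' = Mᴴ := by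
    rw [hM'_def, hM_def, ← Matrix.exp_conjTranspose]
    congr 1
    rw [Matrix.conjTranspose_smul]
    simp
  have hXpsd : (M' * P * M).PosSemidef := by
    rw [hM']; exact hP.conjTranspose_mul_mul_same M
  have hYpsd : (M' * N * M).PosSemidef := by
    rw [hM']; exact hN.conjTranspose_mul_mul_same M
  have hsplit : M' * σ * M = M' * P * M - M' * N * M := by
    rw [hde, Matrix.mul_sub, Matrix.sub_mul]
  rw [hsplit]
  calc traceNorm (M' * P * M - M' * N * M)
      ≤ (M' * P * M).trace.re + (M' * N * M).trace.re := traceNorm_sub_le hXpsd hYpsd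
    _ ≤ P.trace.re + N.trace.re := by
        exact add_le_add (trace_exp_conj_le A P hP hNpsd ht) (trace_exp_conj_le A N hN hNpsd ht)
    _ = traceNorm σ := htr
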